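/- Let p, m be positive integers and a, b nonzero rationals. Let u, v, w, t be rationals such that u^(m+1)·t^p − v^p·w^(m+1) ≠ 0 and v, t ≠ 0. Define T = (b·v^p·w^m − a·u^m·t^p)/(u^(m+1)·t^p − v^p·w^(m+1)), and set x1 = uT, y1 = vT, x2 = wT, y2 = tT. Then x1^m·(x1 + a)/y1^p = x2^m·(x2 + b)/y2^p (assuming T ≠ 0). -/

import Mathlib

theorem stmt7 (p m : ℕ) (hp0 : 0 < p) (hm0 : 0 < m) (a b : ℚ)
    (ha : a ≠ 0) (hb : b ≠ 0) (u v w t : ℚ)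
    (hv : v ≠ 0) (ht : t ≠ 0)
    (hden : u ^ (m + 1) * t ^ p - v ^ p * w ^ (m + 1) ≠ 0)
    (T : ℚ)
    (hT : T = (b * v ^ p * w ^ m - a * u ^ m * t ^ p) / (u ^ (m + 1) * t ^ p - v ^ p * w ^ (m + 1)))
    (hT0 : T ≠ 0)
    (x1 y1 x2 y2 : ℚ)
    (hx1 : x1 = u * T) (hy1 : y1 = v * T) (hx2 : x2 = w * T) (hy2 : y2 = t * T) :
    x1 ^ m * (x1 + a) / y1 ^ p = x2 ^ m * (x2 + b) / y2 ^ p := by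
  have hT' : T * (u ^ (m + 1) * t ^ p - v ^ p * w ^ (m + 1))
      = b * v ^ p * w ^ m - a * u ^ m * t ^ p := by
    rw [hT, div_mul_eq_mul_div, mul_div_assoc, div_self hden, mul_one]
  subst hx1 hy1 hx2 hy2
  rw [div_eq_div_iff (pow_ne_zero _ (mul_ne_zero hv hT0)) (pow_ne_zero _ (mul_ne_zero ht hT0))]
  linear_combination (T ^ m * T ^ p) * hT'
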